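/- Let p₁, p₂, p₃ ∈ ℝ² be three pairwise distinct collinear points with p₂ strictly between p₁ and p₃. Then the space of equilibrium stresses on the triangle graph K₃ realized by these points is one-dimensional, and every nonzero equilibrium stress s satisfies sign(s({1,2})) = sign(s({2,3})) = −sign(s({1,3})) with all three values nonzero. -/

import Mathlib

/-- An equilibrium stress on the triangle graph `K₃` realized by `p : Fin 3 → ℝ²`
(vector convention), encoded as a symmetric matrix vanishing on the diagonal. -/
def IsK3Stress (p : Fin 3 → EuclideanSpace ℝ (Fin 2))
    (s : Fin 3 → Fin 3 → ℝ) : Prop :=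
  (∀ i j, s i j = s j i) ∧ (∀ i, s i i = 0) ∧
    ∀ i, ∑ j, s i j • (p i - p j) = 0

/-- Three pairwise distinct collinear points, the middle one strictly between the other
two, yield a one-dimensional space of equilibrium stresses on `K₃`, and every nonzero
stress satisfies `sign s₁₂ = sign s₂₃ = -sign s₁₃`, all values nonzero. -/
theorem K3_collinear_stress
    (p : Fin 3 → EuclideanSpace ℝ (Fin 2))
    (h01 : p 0 ≠ p 1) (h02 : p 0 ≠ p 2) (h12 : p 1 ≠ p 2)
    (hcol : Collinear ℝ {p 0, p 1, p 2})
    (hbtw : Sbtw ℝ (p 0) (p 1) (p 2)) :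
    (∃ s₀ : Fin 3 → Fin 3 → ℝ, IsK3Stress p s₀ ∧ s₀ ≠ 0 ∧
        ∀ s : Fin 3 → Fin 3 → ℝ, IsK3Stress p s → ∃ c : ℝ, s = c • s₀) ∧
    (∀ s : Fin 3 → Fin 3 → ℝ, IsK3Stress p s → s ≠ 0 →
        SignType.sign (s 0 1) = SignType.sign (s 1 2) ∧
        SignType.sign (s 0 1) = -SignType.sign (s 0 2) ∧
        s 0 1 ≠ 0 ∧ s 1 2 ≠ 0 ∧ s 0 2 ≠ 0) := by
  obtain ⟨t, ht, hp1⟩ := hbtw.mem_image_Ioo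
  obtain ⟨ht0, ht1⟩ := ht
  have ht1' : (1 : ℝ) - t ≠ 0 := by linarith
  set v : EuclideanSpace ℝ (Fin 2) := p 2 - p 0 with hv
  have hvne : v ≠ 0 := sub_ne_zero.mpr (Ne.symm h02)
  have hp1' : p 1 = p 0 + t • v := by
    rw [← hp1, AffineMap.lineMap_apply_module']; abel
  have hd01 : p 0 - p 1 = (-t) • v := by rw [hp1']; module
  have hd10 : p 1 - p 0 = t • v := by rw [hp1']; module
  have hd21 : p 2 - p 1 = (1 - t) • v := by rw [hp1', hv]; module
  have hd20 : p 2 - p 0 = (1 : ℝ) • v := by rw [hv]; module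
  have hd12 : p 1 - p 2 = (t - 1) • v := by rw [hp1', hv]; module
  have hd02 : p 0 - p 2 = (-1 : ℝ) • v := by rw [hv]; module
  -- key: for any stress, relations among entries
  have key : ∀ s : Fin 3 → Fin 3 → ℝ, IsK3Stress p s →
      s 0 2 = -(t * s 0 1) ∧ s 1 2 = (t / (1 - t)) * s 0 1 := by
    intro s ⟨hsym, hdiag, heq⟩
    have h0 := heq 0
    have h1 := heq 1
    rw [Fin.sum_univ_three] at h0 h1
    rw [hdiag 0, hd01, hd02] at h0
    rw [hsym 1 0, hd10, hdiag 1, hd12] at h1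
    have h0' : (s 0 1 * (-t) + s 0 2 * (-1)) • v = 0 := by
      rw [← h0]; module
    have h1' : (s 0 1 * t + s 1 2 * (t - 1)) • v = 0 := by
      rw [← h1]; module
    have e0 : s 0 1 * (-t) + s 0 2 * (-1) = 0 :=
      (smul_eq_zero.mp h0').resolve_right hvne
    have e1 : s 0 1 * t + s 1 2 * (t - 1) = 0 :=
      (smul_eq_zero.mp h1').resolve_right hvne
    constructor
    · linarith
    · field_simp
      linarith
  -- the canonical stress
  set s₀ : Fin 3 → Fin 3 → ℝ :=
    ![![0, 1 - t, -(t * (1 - t))], ![1 - t, 0, t], ![-(t * (1 - t)), t, 0]]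
    with hs₀
  have hstress : IsK3Stress p s₀ := by
    refine ⟨?_, ?_, ?_⟩
    · intro i j; fin_cases i <;> fin_cases j <;> simp [hs₀]
    · intro i; fin_cases i <;> simp [hs₀]
    · intro i
      have e0 : ∑ j, s₀ 0 j • (p 0 - p j) = 0 := by
        rw [Fin.sum_univ_three]
        simp only [hs₀, Matrix.cons_val_zero, Matrix.cons_val_one, Matrix.head_cons,
          Matrix.cons_val_two, Matrix.tail_cons]
        rw [hd01, hd02]; module
      have e1 : ∑ j, s₀ 1 j • (p 1 - p j) = 0 := by
        rw [Fin.sum_univ_three]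
        simp only [hs₀, Matrix.cons_val_zero, Matrix.cons_val_one, Matrix.head_cons,
          Matrix.cons_val_two, Matrix.tail_cons]
        rw [hd10, hd12]; module
      have e2 : ∑ j, s₀ 2 j • (p 2 - p j) = 0 := by
        rw [Fin.sum_univ_three]
        simp only [hs₀, Matrix.cons_val_zero, Matrix.cons_val_one, Matrix.head_cons,
          Matrix.cons_val_two, Matrix.tail_cons]
        rw [hd20, hd21]; module
      fin_cases i
      · exact e0
      · exact e1
      · exact e2
  have hs₀01 : s₀ 0 1 = 1 - t := by simp [hs₀]
  have hne : s₀ ≠ 0 := by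
    intro h
    have := congrFun (congrFun h 0) 1
    rw [hs₀01] at this
    simp at this; linarith
  refine ⟨⟨s₀, hstress, hne, ?_⟩, ?_⟩
  · intro s hs
    obtain ⟨e02, e12⟩ := key s hs
    refine ⟨s 0 1 / (1 - t), ?_⟩
    funext i j
    have hsym := hs.1
    have hdiag := hs.2.1
    fin_cases i <;> fin_cases j <;>
      simp [hs₀, hdiag, Pi.smul_apply, smul_eq_mul] <;>
      first
      | (rw [show s 1 0 = s 0 1 from hsym 1 0]; field_simp)
      | (rw [show s 2 0 = s 0 2 from hsym 2 0, e02]; field_simp <;> ring)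
      | (rw [show s 2 1 = s 1 2 from hsym 2 1, e12]; field_simp <;> ring)
      | (rw [e02]; field_simp <;> ring)
      | (rw [e12]; field_simp <;> ring)
      | field_simp
  · intro s hs hsne
    obtain ⟨e02, e12⟩ := key s hs
    have h01ne : s 0 1 ≠ 0 := by
      intro h
      apply hsne
      funext i j
      have hsym := hs.1
      have hdiag := hs.2.1
      have z02 : s 0 2 = 0 := by rw [e02, h]; ring
      have z12 : s 1 2 = 0 := by rw [e12, h]; ring
      fin_cases i <;> fin_cases j <;>
        simp [hdiag, h, z02, z12, hsym 1 0, hsym 2 0, hsym 2 1]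
    have htpos : (0 : ℝ) < t / (1 - t) := div_pos ht0 (by linarith)
    refine ⟨?_, ?_, h01ne, ?_, ?_⟩
    · rw [e12, sign_mul, sign_pos htpos, one_mul]
    · rw [e02, Left.sign_neg, sign_mul, sign_pos ht0, one_mul, neg_neg]
    · rw [e12]; exact mul_ne_zero (ne_of_gt htpos) h01ne
    · rw [e02]; simp [h01ne, ne_of_gt ht0]
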